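/- Let A = (a_{ij}) ∈ ℝ^{n×n} be a pseudo-diagonalizable matrix for which there exists k ∈ {1,…,n} with a_{kk} ≥ 0 and a_{ii} ≤ 0 for all i ≠ k. Then the maximum cycle mean satisfies λ(A) = a_{kk}, and a vector x ∈ ℝ^n is an eigenvector of A (i.e., max_j (a_{ij} + x_j) = λ + x_i for all i, for some λ ∈ ℝ) if and only if λ = a_{kk} and there exists α ∈ ℝ with x_i = α + a_{ik} for all i (x is a max-plus scalar multiple of the k-th column of A). -/

import Mathlib

open Finset

/-- `A` is pseudo-diagonalizable: similar, via a generalized permutation matrix given by a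
permutation `π` and reals `p i`, to a pseudo-diagonal matrix `D` (a real matrix whose
off-diagonal entries are `0`). -/
def PseudoDiagonalizable {n : ℕ} (A : Fin n → Fin n → ℝ) : Prop :=
  ∃ (π : Equiv.Perm (Fin n)) (p : Fin n → ℝ) (D : Fin n → Fin n → ℝ),
    (∀ i j, i ≠ j → D i j = 0) ∧ ∀ i j, A i j = p i + D (π i) (π j) - p j

/-- The weight of the cycle determined by a list `l` of distinct indices. -/
def cycleWeight {n : ℕ} (A : Fin n → Fin n → ℝ) (l : List (Fin n)) : ℝ :=
  ((l.zip (l.rotate 1)).map fun p => A p.1 p.2).sum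

/-- The mean of a cycle: its weight divided by its length. -/
noncomputable def cycleMean {n : ℕ} (A : Fin n → Fin n → ℝ) (l : List (Fin n)) : ℝ :=
  cycleWeight A l / l.length

/-- The maximum cycle mean `λ(A)`. -/
noncomputable def maxCycleMean {n : ℕ} (A : Fin n → Fin n → ℝ) : ℝ :=
  sSup {m | ∃ l : List (Fin n), l ≠ [] ∧ l.Nodup ∧ m = cycleMean A l}

private lemma list_sum_map_sub' {α : Type*} (l : List α) (f g : α → ℝ) :
    (l.map fun a => f a - g a).sum = (l.map f).sum - (l.map g).sum := by
  induction l with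
  | nil => simp
  | cons a t ih => simp [ih]; ring

private lemma zip_rotate_ne {n : ℕ} {l : List (Fin n)} (hl : l.Nodup)
    (h2 : 2 ≤ l.length) : ∀ q ∈ l.zip (l.rotate 1), q.1 ≠ q.2 := by
  intro q hq
  obtain ⟨i, hi, hiq⟩ := List.mem_iff_getElem.mp hq
  have hilen : i < l.length := by
    simpa [List.length_zip, List.length_rotate] using hi
  have hmod : (i + 1) % l.length < l.length := Nat.mod_lt _ (by omega)
  have h1 : q.1 = l[i] := by
    rw [← hiq]; rw [List.getElem_zip]
  have h2' : q.2 = l[(i + 1) % l.length] := by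
    rw [← hiq]; rw [List.getElem_zip]
    have := List.get_rotate l 1 ⟨i, by simpa [List.length_rotate] using hilen⟩
    simpa using this
  intro hqq
  have : l[i] = l[(i + 1) % l.length] := by rw [← h1, ← h2', hqq]
  have hij : i = (i + 1) % l.length :=
    (List.Nodup.getElem_inj_iff hl).mp this
  rcases Nat.lt_or_ge (i + 1) l.length with h | h
  · rw [Nat.mod_eq_of_lt h] at hij; omega
  · have : i + 1 = l.length := by omega
    rw [this, Nat.mod_self] at hij; omega

private lemma cycleWeight_eq_zero {n : ℕ} {A : Fin n → Fin n → ℝ} {p : Fin n → ℝ}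
    (hoff : ∀ i j : Fin n, i ≠ j → A i j = p i - p j)
    {l : List (Fin n)} (hl : l.Nodup) (h2 : 2 ≤ l.length) :
    cycleWeight A l = 0 := by
  have hne := zip_rotate_ne hl h2
  have hlen : l.length ≤ (l.rotate 1).length := by rw [List.length_rotate]
  have hlen' : (l.rotate 1).length ≤ l.length := by rw [List.length_rotate]
  unfold cycleWeight
  have h1 : ((l.zip (l.rotate 1)).map fun q => A q.1 q.2)
      = ((l.zip (l.rotate 1)).map fun q => p q.1 - p q.2) := by
    apply List.map_congr_left
    intro q hq
    exact hoff _ _ (hne q hq)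
  rw [h1, list_sum_map_sub' (l.zip (l.rotate 1)) (fun q => p q.1) (fun q => p q.2)]
  have hf : (l.zip (l.rotate 1)).map (fun q => p q.1)
      = (l.map p : List ℝ) := by
    rw [show (fun q : Fin n × Fin n => p q.1) = p ∘ Prod.fst from rfl, ← List.map_map,
      List.map_fst_zip hlen]
  have hs : (l.zip (l.rotate 1)).map (fun q => p q.2)
      = ((l.rotate 1).map p : List ℝ) := by
    rw [show (fun q : Fin n × Fin n => p q.2) = p ∘ Prod.snd from rfl, ← List.map_map,
      List.map_snd_zip hlen']
  rw [hf, hs, List.Perm.sum_eq ((List.rotate_perm l 1).map p)]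
  ring

/-- Let `A` be pseudo-diagonalizable with `A k k ≥ 0` and `A i i ≤ 0` for
`i ≠ k`.  Then `λ(A) = A k k`, and a real vector `x` is an eigenvector of `A` with
eigenvalue `l` iff `l = A k k` and `x` is a max-plus scalar multiple of the `k`-th column
of `A`. -/
theorem eigen_pseudoDiagonalizable_optimalNode {n : ℕ} [NeZero n]
    (A : Fin n → Fin n → ℝ) (hA : PseudoDiagonalizable A)
    (k : Fin n) (hk : 0 ≤ A k k) (hk' : ∀ i, i ≠ k → A i i ≤ 0) :
    maxCycleMean A = A k k ∧
      ∀ (x : Fin n → ℝ) (l : ℝ),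
        (∀ i, (univ.sup' univ_nonempty fun j => A i j + x j) = l + x i) ↔
          (l = A k k ∧ ∃ α : ℝ, ∀ i, x i = α + A i k) := by
  obtain ⟨π, p, D, hD, hAD⟩ := hA
  have hoff : ∀ i j : Fin n, i ≠ j → A i j = p i - p j := by
    intro i j hij
    rw [hAD i j, hD (π i) (π j) (fun h => hij (π.injective h))]
    ring
  have hdiag : ∀ i : Fin n, A i i ≤ A k k := by
    intro i
    by_cases hik : i = k
    · subst hik; exact le_refl _
    · exact le_trans (hk' i hik) hk
  constructor
  · -- maxCycleMean A = A k k
    apply le_antisymm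
    · apply csSup_le
      · exact ⟨A k k, [k], by simp, by simp,
          by simp [cycleMean, cycleWeight, List.rotate_singleton]⟩
      · rintro m ⟨l, hne, hnd, rfl⟩
        rcases Nat.lt_or_ge l.length 2 with h2 | h2
        · have h1 : l.length = 1 := by
            have := List.length_pos_iff.mpr hne
            omega
          obtain ⟨a, rfl⟩ := List.length_eq_one_iff.mp h1
          have : cycleMean A [a] = A a a := by
            simp [cycleMean, cycleWeight, List.rotate_singleton]
          rw [this]
          exact hdiag a
        · have : cycleMean A l = 0 := by
            simp [cycleMean, cycleWeight_eq_zero hoff hnd h2]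
          rw [this]
          exact hk
    · apply le_csSup
      · refine ⟨A k k, ?_⟩
        rintro m ⟨l, hne, hnd, rfl⟩
        rcases Nat.lt_or_ge l.length 2 with h2 | h2
        · have h1 : l.length = 1 := by
            have := List.length_pos_iff.mpr hne
            omega
          obtain ⟨a, rfl⟩ := List.length_eq_one_iff.mp h1
          have : cycleMean A [a] = A a a := by
            simp [cycleMean, cycleWeight, List.rotate_singleton]
          rw [this]
          exact hdiag a
        · have : cycleMean A l = 0 := by
            simp [cycleMean, cycleWeight_eq_zero hoff hnd h2]
          rw [this]
          exact hk
      · exact ⟨[k], by simp, by simp,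
          by simp [cycleMean, cycleWeight, List.rotate_singleton]⟩
  · intro x l
    set q : Fin n → ℝ := fun i => x i - p i with hq
    constructor
    · intro h
      -- basic facts
      have F1 : ∀ i j : Fin n, A i j + x j ≤ l + x i := by
        intro i j
        rw [← h i]
        exact Finset.le_sup' (fun j => A i j + x j) (Finset.mem_univ j)
      have F2 : ∀ i : Fin n, ∃ j : Fin n, A i j + x j = l + x i := by
        intro i
        obtain ⟨j, _, hj⟩ := Finset.exists_mem_eq_sup' (univ_nonempty) (fun j => A i j + x j)
        exact ⟨j, by rw [← hj, h i]⟩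
      have D1 : ∀ i : Fin n, A i i ≤ l := by
        intro i
        have := F1 i i
        linarith
      have D2 : ∀ i j : Fin n, j ≠ i → q j ≤ l + q i := by
        intro i j hji
        have := F1 i j
        rw [hoff i j (fun h => hji h.symm)] at this
        simp only [hq]
        linarith
      have hlk : l = A k k := by
        refine le_antisymm ?_ (D1 k)
        by_contra hlt
        push_neg at hlt
        have hl0 : 0 < l := lt_of_le_of_lt hk hlt
        have hall : ∀ i : Fin n, A i i < l := fun i => lt_of_le_of_lt (hdiag i) hlt
        obtain ⟨i, _, hi⟩ := Finset.exists_max_image (univ : Finset (Fin n)) q univ_nonempty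
        obtain ⟨j, hj⟩ := F2 i
        by_cases hji : j = i
        · subst hji
          have := hall j
          linarith
        · rw [hoff i j (fun h => hji h.symm)] at hj
          have hqj : q j = l + q i := by simp only [hq]; linarith
          have := hi j (Finset.mem_univ j)
          linarith
      subst hlk
      refine ⟨rfl, q k - A k k + p k, ?_⟩
      have key : ∀ i : Fin n, i ≠ k → q i = q k - A k k := by
        intro i hik
        have hge : q k - A k k ≤ q i := by
          have := D2 i k (fun h => hik h.symm)
          linarith
        refine le_antisymm ?_ hge
        rcases eq_or_lt_of_le hk with h0 | h0
        · -- A k k = 0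
          have h2 := D2 k i hik
          have : A k k = 0 := h0.symm
          linarith
        · -- A k k > 0 : q is maximized at k
          obtain ⟨m, hmu, hm⟩ := Finset.exists_max_image (univ : Finset (Fin n)) q univ_nonempty
          have hmk : m = k := by
            by_contra hmk
            obtain ⟨j, hj⟩ := F2 m
            by_cases hjm : j = m
            · subst hjm
              have : A j j = A k k := by linarith
              have := hk' j hmk
              linarith
            · rw [hoff m j (fun h => hjm h.symm)] at hj
              have hqj : q j = A k k + q m := by simp only [hq]; linarith
              have := hm j (Finset.mem_univ j)
              linarith
          have hmq : ∀ j : Fin n, q j ≤ q k := by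
            intro j
            rw [← hmk]
            exact hm j (Finset.mem_univ j)
          obtain ⟨j, hj⟩ := F2 i
          by_cases hji : j = i
          · subst hji
            have : A j j = A k k := by linarith
            have := hk' j hik
            linarith
          · rw [hoff i j (fun h => hji h.symm)] at hj
            have hqj : q j = A k k + q i := by simp only [hq]; linarith
            have := hmq j
            linarith
      intro i
      by_cases hik : i = k
      · subst hik
        simp only [hq]
        ring
      · rw [hoff i k hik]
        have := key i hik
        simp only [hq] at this ⊢
        linarith
    · rintro ⟨rfl, α, hx⟩
      intro i
      apply le_antisymm
      · apply Finset.sup'_le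
        intro j _
        by_cases hji : j = i
        · subst hji
          linarith [hdiag j]
        · rw [hoff i j (fun h => hji h.symm)]
          by_cases hjk : j = k
          · have hik : i ≠ k := fun h => hji (hjk.trans h.symm)
            rw [hjk, hx k, hx i, hoff i k hik]
            linarith
          · rw [hx j, hoff j k hjk]
            by_cases hik : i = k
            · subst hik
              rw [hx i]
              linarith
            · rw [hx i, hoff i k hik]
              linarith
      · have hval : A i k + x k = A k k + x i := by
          by_cases hik : i = k
          · subst hik; ring
          · rw [hx k, hx i, hoff i k hik]
            ring
        rw [← hval]
        exact Finset.le_sup' (fun j => A i j + x j) (Finset.mem_univ k)
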